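/- Let J^α (α = 1,2,3) be an almost hypercomplex structure on an open set U ⊆ ℝ^{4r}, and suppose symmetric connection coefficients Γ_{XY}^Z and functions ω_X^α satisfy the quaternionic covariant-constancy condition ∂_X J^α_Y^Z − Γ_{XY}^W J^α_W^Z + Γ_{XW}^Z J^α_Y^W + 2 ε^{αβγ} ω_X^β J^γ_Y^Z = 0 on U. Then for any smooth one-form ξ_W on U, the shifted pair Γ'_{XY}^Z := Γ_{XY}^Z + ξ_X δ_Y^Z + δ_X^Z ξ_Y − Σ_α ( J^α_X^W ξ_W J^α_Y^Z + J^α_X^Z J^α_Y^W ξ_W ) and ω'_X^α := ω_X^α + J^α_X^W ξ_W also satisfies the same quaternionic covariant-constancy condition (and Γ' is again symmetric). Hence the affine and SU(2) connections of a quaternionic structure are only defined up to this one-parameter family of shifts. -/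

import Mathlib

noncomputable section

/-- The Levi-Civita symbol on `Fin 3`, with `ε 0 1 2 = 1`. -/
def epsLC (a b c : Fin 3) : ℝ :=
  if (a, b, c) = ((0 : Fin 3), (1 : Fin 3), (2 : Fin 3)) ∨ (a, b, c) = (1, 2, 0) ∨ (a, b, c) = (2, 0, 1) then 1
  else if (a, b, c) = (2, 1, 0) ∨ (a, b, c) = (0, 2, 1) ∨ (a, b, c) = (1, 0, 2) then -1
  else 0

/-- Partial derivative `∂_i f` of a scalar function on `ℝ^n`. -/
def pd {n : ℕ} (i : Fin n) (f : (Fin n → ℝ) → ℝ) (x : Fin n → ℝ) : ℝ :=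
  fderiv ℝ f x (Pi.single i 1)

/-- The diagonal Nijenhuis tensor `N_{XY}^Z` of a triple of (1,1)-tensor fields. -/
def nijenhuis {n : ℕ} (J : Fin 3 → Fin n → Fin n → (Fin n → ℝ) → ℝ)
    (X Y Z : Fin n) (x : Fin n → ℝ) : ℝ :=
  (1 / 12) * ∑ α, ∑ W,
    (J α X W x * (pd W (J α Y Z) x - pd Y (J α W Z) x)
      - J α Y W x * (pd W (J α X Z) x - pd X (J α W Z) x))

/-- The Obata connection `Γ^{Ob}_{XY}^Z` of a triple of (1,1)-tensor fields. -/
def obata {n : ℕ} (J : Fin 3 → Fin n → Fin n → (Fin n → ℝ) → ℝ)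
    (X Y Z : Fin n) (x : Fin n → ℝ) : ℝ :=
  -(1 / 6) * ∑ α, ∑ W,
    ((pd X (J α Y W) x + pd Y (J α X W) x
        + (1 / 2) * ∑ β, ∑ γ, epsLC α β γ *
            ((∑ u, J β X u x * pd u (J γ Y W) x) + ∑ u, J β Y u x * pd u (J γ X W) x))
      * J α W Z x)

/-- An almost hypercomplex structure on an open set `U ⊆ ℝ^n`: a smooth family of three
(1,1)-tensor fields forming at every point of `U` a quaternionic triple. -/
def IsAlmostHypercomplexOn {n : ℕ} (J : Fin 3 → Fin n → Fin n → (Fin n → ℝ) → ℝ)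
    (U : Set (Fin n → ℝ)) : Prop :=
  (∀ α X Y, ContDiffOn ℝ (⊤ : ℕ∞) (J α X Y) U) ∧
  ∀ α β X Z, ∀ x ∈ U, ∑ W, J α X W x * J β W Z x =
    (if α = β then (-1 : ℝ) else 0) * (if X = Z then 1 else 0)
      + ∑ γ, epsLC α β γ * J γ X Z x

/-- The shifted affine connection
`Γ'_{XY}^Z = Γ_{XY}^Z + ξ_X δ_Y^Z + δ_X^Z ξ_Y − Σ_α (J^α_X^W ξ_W J^α_Y^Z + J^α_X^Z J^α_Y^W ξ_W)`. -/
def gammaShift {n : ℕ} (Γ : Fin n → Fin n → Fin n → (Fin n → ℝ) → ℝ)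
    (J : Fin 3 → Fin n → Fin n → (Fin n → ℝ) → ℝ)
    (ξ : Fin n → (Fin n → ℝ) → ℝ) (X Y Z : Fin n) (x : Fin n → ℝ) : ℝ :=
  Γ X Y Z x + ξ X x * (if Y = Z then 1 else 0) + (if X = Z then (1 : ℝ) else 0) * ξ Y x
    - ∑ α, ((∑ W, J α X W x * ξ W x) * J α Y Z x + J α X Z x * (∑ W, J α Y W x * ξ W x))

/-- The shifted SU(2) connection `ω'_X^α = ω_X^α + J^α_X^W ξ_W`. -/
def omegaShift {n : ℕ} (ω : Fin 3 → Fin n → (Fin n → ℝ) → ℝ)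
    (J : Fin 3 → Fin n → Fin n → (Fin n → ℝ) → ℝ)
    (ξ : Fin n → (Fin n → ℝ) → ℝ) (α : Fin 3) (X : Fin n) (x : Fin n → ℝ) : ℝ :=
  ω α X x + ∑ W, J α X W x * ξ W x

@[simp] lemma epsv000 : epsLC 0 0 0 = 0 := by norm_num [epsLC, Prod.ext_iff, Fin.ext_iff]
@[simp] lemma epsv001 : epsLC 0 0 1 = 0 := by norm_num [epsLC, Prod.ext_iff, Fin.ext_iff]
@[simp] lemma epsv002 : epsLC 0 0 2 = 0 := by norm_num [epsLC, Prod.ext_iff, Fin.ext_iff]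
@[simp] lemma epsv010 : epsLC 0 1 0 = 0 := by norm_num [epsLC, Prod.ext_iff, Fin.ext_iff]
@[simp] lemma epsv011 : epsLC 0 1 1 = 0 := by norm_num [epsLC, Prod.ext_iff, Fin.ext_iff]
@[simp] lemma epsv012 : epsLC 0 1 2 = 1 := by norm_num [epsLC, Prod.ext_iff, Fin.ext_iff]
@[simp] lemma epsv020 : epsLC 0 2 0 = 0 := by norm_num [epsLC, Prod.ext_iff, Fin.ext_iff]
@[simp] lemma epsv021 : epsLC 0 2 1 = -1 := by norm_num [epsLC, Prod.ext_iff, Fin.ext_iff]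
@[simp] lemma epsv022 : epsLC 0 2 2 = 0 := by norm_num [epsLC, Prod.ext_iff, Fin.ext_iff]
@[simp] lemma epsv100 : epsLC 1 0 0 = 0 := by norm_num [epsLC, Prod.ext_iff, Fin.ext_iff]
@[simp] lemma epsv101 : epsLC 1 0 1 = 0 := by norm_num [epsLC, Prod.ext_iff, Fin.ext_iff]
@[simp] lemma epsv102 : epsLC 1 0 2 = -1 := by norm_num [epsLC, Prod.ext_iff, Fin.ext_iff]
@[simp] lemma epsv110 : epsLC 1 1 0 = 0 := by norm_num [epsLC, Prod.ext_iff, Fin.ext_iff]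
@[simp] lemma epsv111 : epsLC 1 1 1 = 0 := by norm_num [epsLC, Prod.ext_iff, Fin.ext_iff]
@[simp] lemma epsv112 : epsLC 1 1 2 = 0 := by norm_num [epsLC, Prod.ext_iff, Fin.ext_iff]
@[simp] lemma epsv120 : epsLC 1 2 0 = 1 := by norm_num [epsLC, Prod.ext_iff, Fin.ext_iff]
@[simp] lemma epsv121 : epsLC 1 2 1 = 0 := by norm_num [epsLC, Prod.ext_iff, Fin.ext_iff]
@[simp] lemma epsv122 : epsLC 1 2 2 = 0 := by norm_num [epsLC, Prod.ext_iff, Fin.ext_iff]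
@[simp] lemma epsv200 : epsLC 2 0 0 = 0 := by norm_num [epsLC, Prod.ext_iff, Fin.ext_iff]
@[simp] lemma epsv201 : epsLC 2 0 1 = 1 := by norm_num [epsLC, Prod.ext_iff, Fin.ext_iff]
@[simp] lemma epsv202 : epsLC 2 0 2 = 0 := by norm_num [epsLC, Prod.ext_iff, Fin.ext_iff]
@[simp] lemma epsv210 : epsLC 2 1 0 = -1 := by norm_num [epsLC, Prod.ext_iff, Fin.ext_iff]
@[simp] lemma epsv211 : epsLC 2 1 1 = 0 := by norm_num [epsLC, Prod.ext_iff, Fin.ext_iff]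
@[simp] lemma epsv212 : epsLC 2 1 2 = 0 := by norm_num [epsLC, Prod.ext_iff, Fin.ext_iff]
@[simp] lemma epsv220 : epsLC 2 2 0 = 0 := by norm_num [epsLC, Prod.ext_iff, Fin.ext_iff]
@[simp] lemma epsv221 : epsLC 2 2 1 = 0 := by norm_num [epsLC, Prod.ext_iff, Fin.ext_iff]
@[simp] lemma epsv222 : epsLC 2 2 2 = 0 := by norm_num [epsLC, Prod.ext_iff, Fin.ext_iff]

@[simp] lemma fin3_mk_two (h : 2 < 3) : (⟨2, h⟩ : Fin 3) = 2 := rfl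

set_option maxHeartbeats 1000000 in
lemma quatShiftKey {n : ℕ} (a : Fin 3 → Fin n → Fin n → ℝ) (xi : Fin n → ℝ)
    (h : ∀ α β X Z, ∑ W, a α X W * a β W Z =
      (if α = β then (-1 : ℝ) else 0) * (if X = Z then 1 else 0) + ∑ γ, epsLC α β γ * a γ X Z)
    (α : Fin 3) (X Y Z : Fin n) :
    -(∑ W, (xi X * (if Y = W then (1:ℝ) else 0) + (if X = W then (1:ℝ) else 0) * xi Y
        - ∑ β, ((∑ u, a β X u * xi u) * a β Y W + a β X W * (∑ u, a β Y u * xi u))) * a α W Z)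
    + (∑ W, (xi X * (if W = Z then (1:ℝ) else 0) + (if X = Z then (1:ℝ) else 0) * xi W
        - ∑ β, ((∑ u, a β X u * xi u) * a β W Z + a β X Z * (∑ u, a β W u * xi u))) * a α Y W)
    + 2 * ∑ β, ∑ γ, epsLC α β γ * (∑ u, a β X u * xi u) * a γ Y Z = 0 := by
  have hA : (∑ W, (xi X * (if Y = W then (1:ℝ) else 0) + (if X = W then (1:ℝ) else 0) * xi Y
        - ∑ β, ((∑ u, a β X u * xi u) * a β Y W + a β X W * (∑ u, a β Y u * xi u))) * a α W Z)
      = xi X * a α Y Z + xi Y * a α X Z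
        - ∑ β, ((∑ u, a β X u * xi u) * ((if β = α then (-1:ℝ) else 0) * (if Y = Z then 1 else 0)
              + ∑ γ, epsLC β α γ * a γ Y Z)
            + (∑ u, a β Y u * xi u) * ((if β = α then (-1:ℝ) else 0) * (if X = Z then 1 else 0)
              + ∑ γ, epsLC β α γ * a γ X Z)) := by
    calc (∑ W, (xi X * (if Y = W then (1:ℝ) else 0) + (if X = W then (1:ℝ) else 0) * xi Y
        - ∑ β, ((∑ u, a β X u * xi u) * a β Y W + a β X W * (∑ u, a β Y u * xi u))) * a α W Z)
        = ∑ W, ((if Y = W then xi X * a α W Z else 0) + (if X = W then xi Y * a α W Z else 0)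
            - ∑ β, ((∑ u, a β X u * xi u) * (a β Y W * a α W Z)
                + (∑ u, a β Y u * xi u) * (a β X W * a α W Z))) := by
          refine Finset.sum_congr rfl fun W _ => ?_
          rw [sub_mul, add_mul, Finset.sum_mul]
          have : (∑ β, ((∑ u, a β X u * xi u) * a β Y W + a β X W * (∑ u, a β Y u * xi u)) * a α W Z)
              = ∑ β, ((∑ u, a β X u * xi u) * (a β Y W * a α W Z)
                  + (∑ u, a β Y u * xi u) * (a β X W * a α W Z)) :=
            Finset.sum_congr rfl fun β _ => by ring
          rw [this]
          by_cases h1 : Y = W <;> by_cases h2 : X = W <;> simp [h1, h2]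
      _ = xi X * a α Y Z + xi Y * a α X Z
            - ∑ β, ((∑ u, a β X u * xi u) * (∑ W, a β Y W * a α W Z)
                + (∑ u, a β Y u * xi u) * (∑ W, a β X W * a α W Z)) := by
          rw [Finset.sum_sub_distrib, Finset.sum_add_distrib, Finset.sum_ite_eq,
            Finset.sum_ite_eq, Finset.sum_comm]
          simp only [Finset.mem_univ, if_true]
          congr 1
          exact Finset.sum_congr rfl fun β _ => by
            rw [Finset.sum_add_distrib, ← Finset.mul_sum, ← Finset.mul_sum]
      _ = _ := by simp only [h]
  have hxiQ : ∀ β : Fin 3, (∑ x, ((if α = β then (-1:ℝ) else 0) * (if Y = x then 1 else 0)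
        + ∑ γ, epsLC α β γ * a γ Y x) * xi x)
      = (if α = β then (-1:ℝ) else 0) * xi Y + ∑ γ, epsLC α β γ * (∑ u, a γ Y u * xi u) := by
    intro β
    calc (∑ x, ((if α = β then (-1:ℝ) else 0) * (if Y = x then 1 else 0)
          + ∑ γ, epsLC α β γ * a γ Y x) * xi x)
        = ∑ x, ((if Y = x then (if α = β then (-1:ℝ) else 0) * xi x else 0)
            + ∑ γ, epsLC α β γ * (a γ Y x * xi x)) := by
          refine Finset.sum_congr rfl fun x _ => ?_
          rw [add_mul, Finset.sum_mul]
          have : (∑ γ, (epsLC α β γ * a γ Y x) * xi x)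
              = ∑ γ, epsLC α β γ * (a γ Y x * xi x) :=
            Finset.sum_congr rfl fun γ _ => by ring
          rw [this]
          by_cases h1 : Y = x <;> simp [h1]
      _ = _ := by
          rw [Finset.sum_add_distrib, Finset.sum_ite_eq, Finset.sum_comm]
          simp only [Finset.mem_univ, if_true]
          congr 1
          exact Finset.sum_congr rfl fun γ _ => by rw [← Finset.mul_sum]
  have hB : (∑ W, (xi X * (if W = Z then (1:ℝ) else 0) + (if X = Z then (1:ℝ) else 0) * xi W
        - ∑ β, ((∑ u, a β X u * xi u) * a β W Z + a β X Z * (∑ u, a β W u * xi u))) * a α Y W)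
      = xi X * a α Y Z + (if X = Z then (1:ℝ) else 0) * (∑ u, a α Y u * xi u)
        - ∑ β, ((∑ u, a β X u * xi u) * ((if α = β then (-1:ℝ) else 0) * (if Y = Z then 1 else 0)
              + ∑ γ, epsLC α β γ * a γ Y Z)
            + a β X Z * ((if α = β then (-1:ℝ) else 0) * xi Y
              + ∑ γ, epsLC α β γ * (∑ u, a γ Y u * xi u))) := by
    calc (∑ W, (xi X * (if W = Z then (1:ℝ) else 0) + (if X = Z then (1:ℝ) else 0) * xi W
        - ∑ β, ((∑ u, a β X u * xi u) * a β W Z + a β X Z * (∑ u, a β W u * xi u))) * a α Y W)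
        = ∑ W, ((if W = Z then xi X * a α Y W else 0)
            + (if X = Z then (1:ℝ) else 0) * (a α Y W * xi W)
            - ∑ β, ((∑ u, a β X u * xi u) * (a α Y W * a β W Z)
                + a β X Z * (a α Y W * (∑ u, a β W u * xi u)))) := by
          refine Finset.sum_congr rfl fun W _ => ?_
          rw [sub_mul, add_mul, Finset.sum_mul]
          have : (∑ β, ((∑ u, a β X u * xi u) * a β W Z + a β X Z * (∑ u, a β W u * xi u)) * a α Y W)
              = ∑ β, ((∑ u, a β X u * xi u) * (a α Y W * a β W Z)
                  + a β X Z * (a α Y W * (∑ u, a β W u * xi u))) :=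
            Finset.sum_congr rfl fun β _ => by ring
          rw [this]
          by_cases h1 : W = Z <;> simp [h1] <;> ring
      _ = xi X * a α Y Z + (if X = Z then (1:ℝ) else 0) * (∑ u, a α Y u * xi u)
            - ∑ β, ((∑ u, a β X u * xi u) * (∑ W, a α Y W * a β W Z)
                + a β X Z * (∑ u, (∑ W, a α Y W * a β W u) * xi u)) := by
          rw [Finset.sum_sub_distrib, Finset.sum_add_distrib, Finset.sum_ite_eq',
            ← Finset.mul_sum]
          simp only [Finset.mem_univ, if_true]
          congr 1
          rw [Finset.sum_comm]
          exact Finset.sum_congr rfl fun β _ => by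
            rw [Finset.sum_add_distrib, ← Finset.mul_sum, ← Finset.mul_sum]
            congr 2
            calc (∑ i, a α Y i * ∑ u, a β i u * xi u)
                = ∑ i, ∑ u, a α Y i * (a β i u * xi u) := by
                  simp only [Finset.mul_sum]
              _ = ∑ u, ∑ i, a α Y i * (a β i u * xi u) := Finset.sum_comm
              _ = ∑ u, (∑ W, a α Y W * a β W u) * xi u :=
                  Finset.sum_congr rfl fun u _ => by
                    rw [Finset.sum_mul]
                    exact Finset.sum_congr rfl fun W _ => by ring
      _ = _ := by
          simp only [h]
          congr 1
          refine Finset.sum_congr rfl fun β _ => ?_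
          rw [hxiQ β]
  rw [hA, hB]
  fin_cases α <;>
    · simp only [Fin.sum_univ_three, Fin.isValue, Fin.zero_eta, Fin.mk_one, fin3_mk_two, epsv000, epsv001,
        epsv002, epsv010, epsv011,
        epsv012, epsv020, epsv021, epsv022, epsv100, epsv101, epsv102, epsv110, epsv111, epsv112,
        epsv120, epsv121, epsv122, epsv200, epsv201, epsv202, epsv210, epsv211, epsv212,
        epsv220, epsv221, epsv222, zero_mul, mul_zero, one_mul, mul_one, neg_mul, add_zero,
        zero_add, mul_neg, Fin.reduceEq, if_true, if_false, reduceIte]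
      ring

/-- the quaternionic covariant-constancy condition is preserved by the shift
`(Γ, ω) ↦ (Γ', ω')` by an arbitrary smooth one-form `ξ`, and `Γ'` is again symmetric. -/
theorem stmt_9 (r : ℕ) (U : Set (Fin (4 * r) → ℝ)) (hU : IsOpen U)
    (J : Fin 3 → Fin (4 * r) → Fin (4 * r) → (Fin (4 * r) → ℝ) → ℝ)
    (hJ : IsAlmostHypercomplexOn J U)
    (Γ : Fin (4 * r) → Fin (4 * r) → Fin (4 * r) → (Fin (4 * r) → ℝ) → ℝ)
    (hΓsym : ∀ X Y Z, ∀ x ∈ U, Γ X Y Z x = Γ Y X Z x)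
    (ω : Fin 3 → Fin (4 * r) → (Fin (4 * r) → ℝ) → ℝ)
    (hcov : ∀ α X Y Z, ∀ x ∈ U,
      pd X (J α Y Z) x
        - (∑ W, Γ X Y W x * J α W Z x)
        + (∑ W, Γ X W Z x * J α Y W x)
        + 2 * ∑ β, ∑ γ, epsLC α β γ * ω β X x * J γ Y Z x = 0)
    (ξ : Fin (4 * r) → (Fin (4 * r) → ℝ) → ℝ)
    (hξsmooth : ∀ W, ContDiffOn ℝ (⊤ : ℕ∞) (ξ W) U) :
    (∀ X Y Z, ∀ x ∈ U, gammaShift Γ J ξ X Y Z x = gammaShift Γ J ξ Y X Z x) ∧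
    (∀ α X Y Z, ∀ x ∈ U,
      pd X (J α Y Z) x
        - (∑ W, gammaShift Γ J ξ X Y W x * J α W Z x)
        + (∑ W, gammaShift Γ J ξ X W Z x * J α Y W x)
        + 2 * ∑ β, ∑ γ, epsLC α β γ * omegaShift ω J ξ β X x * J γ Y Z x = 0) := by
  constructor
  · intro X Y Z x hx
    unfold gammaShift
    rw [hΓsym X Y Z x hx]
    have hs : (∑ α, ((∑ W, J α X W x * ξ W x) * J α Y Z x + J α X Z x * (∑ W, J α Y W x * ξ W x)))
        = ∑ α, ((∑ W, J α Y W x * ξ W x) * J α X Z x + J α Y Z x * (∑ W, J α X W x * ξ W x)) :=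
      Finset.sum_congr rfl fun β _ => by ring
    rw [hs]; ring
  · intro α X Y Z x hx
    have h0 := hcov α X Y Z x hx
    have key := quatShiftKey (fun β A B => J β A B x) (fun u => ξ u x)
      (fun α β A B => hJ.2 α β A B x hx) α X Y Z
    have e1 : (∑ W, gammaShift Γ J ξ X Y W x * J α W Z x)
        = (∑ W, Γ X Y W x * J α W Z x)
          + ∑ W, (ξ X x * (if Y = W then (1:ℝ) else 0) + (if X = W then (1:ℝ) else 0) * ξ Y x
              - ∑ β, ((∑ u, J β X u x * ξ u x) * J β Y W x
                + J β X W x * (∑ u, J β Y u x * ξ u x))) * J α W Z x := by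
      rw [← Finset.sum_add_distrib]
      exact Finset.sum_congr rfl fun W _ => by unfold gammaShift; ring
    have e2 : (∑ W, gammaShift Γ J ξ X W Z x * J α Y W x)
        = (∑ W, Γ X W Z x * J α Y W x)
          + ∑ W, (ξ X x * (if W = Z then (1:ℝ) else 0) + (if X = Z then (1:ℝ) else 0) * ξ W x
              - ∑ β, ((∑ u, J β X u x * ξ u x) * J β W Z x
                + J β X Z x * (∑ u, J β W u x * ξ u x))) * J α Y W x := by
      rw [← Finset.sum_add_distrib]
      exact Finset.sum_congr rfl fun W _ => by unfold gammaShift; ring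
    have e3 : (∑ β, ∑ γ, epsLC α β γ * omegaShift ω J ξ β X x * J γ Y Z x)
        = (∑ β, ∑ γ, epsLC α β γ * ω β X x * J γ Y Z x)
          + ∑ β, ∑ γ, epsLC α β γ * (∑ u, J β X u x * ξ u x) * J γ Y Z x := by
      rw [← Finset.sum_add_distrib]
      refine Finset.sum_congr rfl fun β _ => ?_
      rw [← Finset.sum_add_distrib]
      exact Finset.sum_congr rfl fun γ _ => by unfold omegaShift; ring
    rw [e1, e2, e3]
    linear_combination h0 + key
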